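/- Let S be a closed subset of ℝ^d, and suppose w*_α minimizes f_α over S ∩ B̄_β and w* minimizes f over S ∩ B̄_β. Then |f_α(w*_α) − f(w*)| ≤ α·L₀·√(d/12), where L₀ := E[L₀(ξ)]. -/

import Mathlib

open MeasureTheory Filter
open scoped Classical BigOperators

noncomputable section

/-- The closed `l∞`-ball of radius `r` centered at `0` in `ℝ^d`. -/
def Binf (d : ℕ) (r : ℝ) : Set (EuclideanSpace ℝ (Fin d)) := {z | ∀ i, |z i| ≤ r}

/-- The uniform probability distribution on the closed `l∞`-ball of radius `r` in `ℝ^d`. -/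
def unifMeas (d : ℕ) (r : ℝ) : Measure (EuclideanSpace ℝ (Fin d)) :=
  (volume (Binf d r))⁻¹ • volume.restrict (Binf d r)

/-- The point `w + u` with its `i`-th coordinate replaced by `w i + s`. -/
def shiftPt {d : ℕ} (s : ℝ) (w u : EuclideanSpace ℝ (Fin d)) (i : Fin d) :
    EuclideanSpace ℝ (Fin d) :=
  w + u + (s - u i) • EuclideanSpace.single i (1 : ℝ)

/-- The finite difference `df_i(w, u_{∖i})` of a function `f : ℝ^d → ℝ`. -/
def dfFD {d : ℕ} (α : ℝ) (f : EuclideanSpace ℝ (Fin d) → ℝ)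
    (i : Fin d) (w u : EuclideanSpace ℝ (Fin d)) : ℝ :=
  f (shiftPt (α / 2) w u i) - f (shiftPt (-(α / 2)) w u i)

/-- The finite-difference vector `dF(w,u,ξ)` whose `i`-th component is
`F(…, w_i + α/2, …, ξ) − F(…, w_i − α/2, …, ξ)`. -/
def dFvec {d p : ℕ} (α : ℝ)
    (F : EuclideanSpace ℝ (Fin d) → EuclideanSpace ℝ (Fin p) → ℝ)
    (w u : EuclideanSpace ℝ (Fin d)) (ξ : EuclideanSpace ℝ (Fin p)) :
    EuclideanSpace ℝ (Fin d) :=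
  ∑ i : Fin d,
    (F (shiftPt (α / 2) w u i) ξ - F (shiftPt (-(α / 2)) w u i) ξ) • EuclideanSpace.single i (1 : ℝ)

/-- `f(w) := E[F(w,ξ)]`. -/
def fbar {d p : ℕ} (μξ : Measure (EuclideanSpace ℝ (Fin p)))
    (F : EuclideanSpace ℝ (Fin d) → EuclideanSpace ℝ (Fin p) → ℝ)
    (w : EuclideanSpace ℝ (Fin d)) : ℝ := ∫ ξ, F w ξ ∂μξ

/-- The randomized smoothing `f_α(w) := E[f(w+u)]`, `u` uniform on `B̄_{α/2}`. -/
def smoothed {d : ℕ} (α : ℝ) (f : EuclideanSpace ℝ (Fin d) → ℝ)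
    (w : EuclideanSpace ℝ (Fin d)) : ℝ := ∫ u, f (w + u) ∂(unifMeas d (α / 2))


/-! ### Auxiliary lemmas -/

lemma Binf_eq (d : ℕ) (r : ℝ) :
    Binf d r = (MeasurableEquiv.toLp 2 (Fin d → ℝ)).symm ⁻¹' (Set.pi Set.univ fun _ => Set.Icc (-r) r) := by
  ext z
  simp only [Binf, Set.mem_setOf_eq, Set.mem_preimage, Set.mem_univ_pi, Set.mem_Icc, abs_le]
  rfl

lemma measurableSet_Binf (d : ℕ) (r : ℝ) : MeasurableSet (Binf d r) := by
  rw [Binf_eq]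
  exact (MeasurableSet.univ_pi fun _ => measurableSet_Icc).preimage (MeasurableEquiv.measurable _)

lemma volume_Binf (d : ℕ) (r : ℝ) (hr : 0 ≤ r) :
    volume (Binf d r) = ENNReal.ofReal (2 * r) ^ d := by
  rw [Binf_eq, (EuclideanSpace.volume_preserving_symm_measurableEquiv_toLp (Fin d)).measure_preimage
    (MeasurableSet.univ_pi fun _ => measurableSet_Icc).nullMeasurableSet]
  rw [volume_pi_pi]
  simp only [Real.volume_Icc, Finset.prod_const, Finset.card_univ, Fintype.card_fin]
  congr 2
  ring

lemma isCompact_Binf (d : ℕ) (r : ℝ) : IsCompact (Binf d r) := by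
  have h : Binf d r = (EuclideanSpace.equiv (Fin d) ℝ).toHomeomorph ⁻¹' (Set.pi Set.univ fun _ => Set.Icc (-r) r) := by
    ext z
    show (∀ i, |z i| ≤ r) ↔ ∀ i ∈ Set.univ, z i ∈ Set.Icc (-r) r
    simp [abs_le]
  rw [h, (EuclideanSpace.equiv (Fin d) ℝ).toHomeomorph.isCompact_preimage]
  exact isCompact_univ_pi fun _ => isCompact_Icc

lemma vol_ne_zero (d : ℕ) (r : ℝ) (hr : 0 < r) : volume (Binf d r) ≠ 0 := by
  rw [volume_Binf d r hr.le]
  positivity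

lemma vol_ne_top (d : ℕ) (r : ℝ) (hr : 0 < r) : volume (Binf d r) ≠ ⊤ := by
  rw [volume_Binf d r hr.le]
  exact ENNReal.pow_ne_top ENNReal.ofReal_ne_top

lemma unifMeas_prob (d : ℕ) (r : ℝ) (hr : 0 < r) : IsProbabilityMeasure (unifMeas d r) := by
  constructor
  rw [unifMeas, Measure.smul_apply, Measure.restrict_apply MeasurableSet.univ, Set.univ_inter,
    smul_eq_mul, ENNReal.inv_mul_cancel (vol_ne_zero d r hr) (vol_ne_top d r hr)]

lemma integral_unifMeas (d : ℕ) (r : ℝ) (g : EuclideanSpace ℝ (Fin d) → ℝ) :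
    ∫ u, g u ∂(unifMeas d r) = (volume (Binf d r)).toReal⁻¹ • ∫ u in Binf d r, g u := by
  rw [unifMeas, integral_smul_measure, ENNReal.toReal_inv]

lemma integrable_unifMeas (d : ℕ) (r : ℝ) (hr : 0 < r) (g : EuclideanSpace ℝ (Fin d) → ℝ)
    (hg : ContinuousOn g (Binf d r)) : Integrable g (unifMeas d r) := by
  refine Integrable.smul_measure ?_ (by simp [vol_ne_zero d r hr])
  exact hg.integrableOn_compact (isCompact_Binf d r)

lemma ae_mem_unifMeas (d : ℕ) (r : ℝ) : ∀ᵐ u ∂(unifMeas d r), u ∈ Binf d r := by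
  rw [unifMeas]
  exact Eventually.filter_mono (Measure.ae_smul_measure_le _) (ae_restrict_mem (measurableSet_Binf d r))

-- integral of coordinate square
lemma integral_sq_coord (d : ℕ) (r : ℝ) (hr : 0 < r) (i : Fin d) :
    ∫ u, (u i) ^ 2 ∂(unifMeas d r) = r ^ 2 / 3 := by
  classical
  have hd : 0 < d := i.pos
  have h2r : (0:ℝ) < 2 * r := by linarith
  -- transfer to the pi space
  have e := EuclideanSpace.volume_preserving_symm_measurableEquiv_toLp (Fin d)
  have hset : ∫ u in Binf d r, (u i) ^ 2 ∂volume
      = ∫ x in (Set.pi Set.univ fun _ => Set.Icc (-r) r), (x i) ^ 2 ∂(volume : Measure (Fin d → ℝ)) := by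
    rw [Binf_eq]
    exact e.setIntegral_preimage_emb (MeasurableEquiv.measurableEmbedding _)
      (fun x => (x i) ^ 2) _
  -- indicator as product
  have hind : ∀ x : Fin d → ℝ,
      Set.indicator (Set.pi Set.univ fun _ => Set.Icc (-r) r) (fun x => (x i) ^ 2) x
        = ∏ j : Fin d, Set.indicator (Set.Icc (-r) r) (fun t => if j = i then t ^ 2 else 1) (x j) := by
    intro x
    by_cases hx : ∀ j, x j ∈ Set.Icc (-r) r
    · rw [Set.indicator_of_mem (Set.mem_univ_pi.mpr hx)]
      have : ∀ j : Fin d, Set.indicator (Set.Icc (-r) r) (fun t => if j = i then t ^ 2 else 1) (x j)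
          = if j = i then (x j) ^ 2 else 1 := fun j => Set.indicator_of_mem (hx j) _
      simp only [this]
      simp
    · push_neg at hx
      obtain ⟨j, hj⟩ := hx
      rw [Set.indicator_of_notMem (fun hmem => hj (Set.mem_univ_pi.mp hmem j))]
      exact (Finset.prod_eq_zero (Finset.mem_univ j)
        (Set.indicator_of_notMem hj _)).symm
  have hpi : ∫ x in (Set.pi Set.univ fun _ => Set.Icc (-r) r), (x i) ^ 2 ∂(volume : Measure (Fin d → ℝ))
      = (2 * r ^ 3 / 3) * (2 * r) ^ (d - 1) := by
    rw [← integral_indicator (MeasurableSet.univ_pi fun _ => measurableSet_Icc)]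
    simp_rw [hind]
    rw [integral_fintype_prod_volume_eq_prod (ι := Fin d)
      (f := fun j t => Set.indicator (Set.Icc (-r) r) (fun t => if j = i then t ^ 2 else 1) t)]
    have hone : ∀ j : Fin d, (∫ t : ℝ, Set.indicator (Set.Icc (-r) r) (fun t => if j = i then t ^ 2 else 1) t)
        = if j = i then 2 * r ^ 3 / 3 else 2 * r := by
      intro j
      rw [integral_indicator measurableSet_Icc]
      by_cases hji : j = i
      · simp only [hji, if_true]
        rw [MeasureTheory.integral_Icc_eq_integral_Ioc,
          ← intervalIntegral.integral_of_le (by linarith : -r ≤ r)]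
        rw [integral_pow]
        norm_num
        ring
      · simp only [hji, if_false]
        simp [Real.volume_Icc]
        rw [max_eq_left (by linarith : (0:ℝ) ≤ r + r)]
        ring
    simp only [hone]
    rw [← Finset.mul_prod_erase Finset.univ _ (Finset.mem_univ i)]
    simp only [if_true]
    rw [Finset.prod_congr rfl (fun j hj => if_neg (Finset.ne_of_mem_erase hj)),
      Finset.prod_const, Finset.card_erase_of_mem (Finset.mem_univ i), Finset.card_univ,
      Fintype.card_fin]
  rw [integral_unifMeas, hset, hpi, volume_Binf d r hr.le]
  rw [ENNReal.toReal_pow, ENNReal.toReal_ofReal h2r.le]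
  obtain ⟨k, hk⟩ : ∃ k, d = k + 1 := ⟨d - 1, (Nat.succ_pred_eq_of_pos hd).symm⟩
  subst hk
  simp only [Nat.add_sub_cancel, pow_succ, smul_eq_mul]
  have hne : (2 * r) ^ k ≠ 0 := pow_ne_zero _ h2r.ne'
  field_simp

lemma integral_normsq (d : ℕ) (r : ℝ) (hr : 0 < r) :
    ∫ u, ‖u‖ ^ 2 ∂(unifMeas d r) = d * r ^ 2 / 3 := by
  have hnorm : ∀ u : EuclideanSpace ℝ (Fin d), ‖u‖ ^ 2 = ∑ i, (u i) ^ 2 := by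
    intro u
    rw [EuclideanSpace.norm_eq, Real.sq_sqrt (Finset.sum_nonneg fun i _ => sq_nonneg _)]
    simp [Real.norm_eq_abs, sq_abs]
  simp_rw [hnorm]
  rw [integral_finset_sum _ (fun i _ => (integrable_unifMeas d r hr (fun u => (u i) ^ 2)
    (((EuclideanSpace.proj (𝕜 := ℝ) i).continuous.pow 2).continuousOn) : _))]
  simp_rw [integral_sq_coord d r hr]
  simp [Finset.sum_const]
  ring

lemma sq_int_le {X : Type*} [MeasurableSpace X] (μ : Measure X) [IsProbabilityMeasure μ]
    (g : X → ℝ) (hg : Integrable g μ) (hg2 : Integrable (fun x => g x ^ 2) μ)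
    (hnn : 0 ≤ ∫ x, g x ∂μ) :
    ∫ x, g x ∂μ ≤ Real.sqrt (∫ x, g x ^ 2 ∂μ) := by
  set m := ∫ x, g x ∂μ with hm
  have hexp : ∫ x, (g x - m) ^ 2 ∂μ = (∫ x, g x ^ 2 ∂μ) - m ^ 2 := by
    have h1 : ∀ x, (g x - m) ^ 2 = g x ^ 2 - (2 * m) * g x + m ^ 2 := by intro x; ring
    simp_rw [h1]
    have hint1 : Integrable (fun x => 2 * m * g x) μ := hg.const_mul (2 * m)
    have hint2 : Integrable (fun x => g x ^ 2 - 2 * m * g x) μ := hg2.sub hint1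
    rw [integral_add hint2 (integrable_const _), integral_sub hg2 hint1,
      MeasureTheory.integral_const_mul, integral_const]
    simp [← hm]
    ring
  have h0 : 0 ≤ ∫ x, (g x - m) ^ 2 ∂μ := integral_nonneg fun x => sq_nonneg _
  rw [hexp] at h0
  have h2 := Real.sqrt_le_sqrt (show m ^ 2 ≤ ∫ x, g x ^ 2 ∂μ by linarith)
  rwa [Real.sqrt_sq hnn] at h2

/-- Let `S ⊆ ℝ^d` be closed, let `wα*` minimize `f_α` over `S ∩ B̄_β` and let
`w*` minimize `f` over `S ∩ B̄_β`. Then `|f_α(wα*) − f(w*)| ≤ α·L₀·√(d/12)`,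
where `L₀ := E[L₀(ξ)]`. -/
theorem smoothed_min_value_error
    (d p : ℕ) (α β κ : ℝ) (hα : 0 < α) (hβ : 0 < β) (hκ : β + α / 2 < κ)
    (μξ : Measure (EuclideanSpace ℝ (Fin p))) [IsProbabilityMeasure μξ]
    (F : EuclideanSpace ℝ (Fin d) → EuclideanSpace ℝ (Fin p) → ℝ)
    (hFmeas : Measurable (Function.uncurry F))
    (hFcont : ∀ ξ, ContinuousOn (fun w => F w ξ) (Binf d κ))
    (L0 : EuclideanSpace ℝ (Fin p) → ℝ) (hL0meas : Measurable L0)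
    (hL0sq : Integrable (fun ξ => (L0 ξ) ^ 2) μξ)
    (hlip : ∀ᵐ ξ ∂μξ, ∀ w ∈ Binf d κ, ∀ w' ∈ Binf d κ,
      |F w ξ - F w' ξ| ≤ L0 ξ * ‖w - w'‖)
    (hFint : ∀ w ∈ Binf d κ, Integrable (fun ξ => F w ξ) μξ)
    (S : Set (EuclideanSpace ℝ (Fin d))) (hS : IsClosed S)
    (wα wstar : EuclideanSpace ℝ (Fin d))
    (hwα : wα ∈ S ∩ Binf d β)
    (hwαmin : ∀ x ∈ S ∩ Binf d β, smoothed α (fbar μξ F) wα ≤ smoothed α (fbar μξ F) x)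
    (hwstar : wstar ∈ S ∩ Binf d β)
    (hwstarmin : ∀ x ∈ S ∩ Binf d β, fbar μξ F wstar ≤ fbar μξ F x) :
    |smoothed α (fbar μξ F) wα - fbar μξ F wstar| ≤ α * (∫ ξ, L0 ξ ∂μξ) * Real.sqrt (d / 12) := by
  have hc : 0 < α / 2 := by linarith
  haveI : IsProbabilityMeasure (unifMeas d (α / 2)) := unifMeas_prob d (α / 2) hc
  rcases Nat.eq_zero_or_pos d with hd | hd
  · -- degenerate case d = 0
    subst hd
    haveI : Subsingleton (EuclideanSpace ℝ (Fin 0)) :=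
      ⟨fun a b => PiLp.ext fun i => (i : Fin 0).elim0⟩
    have hsm : smoothed α (fbar μξ F) wα = fbar μξ F wα := by
      rw [smoothed]
      have h1 : ∀ u : EuclideanSpace ℝ (Fin 0), wα + u = wα := fun u => Subsingleton.elim _ _
      simp_rw [h1]
      simp [measure_univ]
    rw [hsm, Subsingleton.elim wα wstar, sub_self, abs_zero]
    simp
  -- main case d ≥ 1
  set f := fbar μξ F with hf
  set K := Binf d κ with hK
  set L := ∫ ξ, L0 ξ ∂μξ with hL
  have hκpos : 0 < κ := by linarith
  have hβκ : Binf d β ⊆ K := fun z hz i => le_trans (hz i) (by linarith)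
  have h0K : (0 : EuclideanSpace ℝ (Fin d)) ∈ K := fun i => by simp; positivity
  have hsingleK : EuclideanSpace.single ⟨0, hd⟩ κ ∈ K := by
    intro j
    rw [EuclideanSpace.single_apply]
    by_cases hj : j = ⟨0, hd⟩ <;> simp [hj, abs_of_nonneg hκpos.le, hκpos.le]
  -- L0 is a.e. nonnegative, L ≥ 0, L0 integrable
  have hL0nn : ∀ᵐ ξ ∂μξ, 0 ≤ L0 ξ := by
    filter_upwards [hlip] with ξ h
    have h2 := h (EuclideanSpace.single ⟨0, hd⟩ κ) hsingleK 0 h0K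
    rw [sub_zero, EuclideanSpace.norm_single, Real.norm_eq_abs, abs_of_nonneg hκpos.le] at h2
    nlinarith [abs_nonneg (F (EuclideanSpace.single ⟨0, hd⟩ κ) ξ - F 0 ξ)]
  have hL0int : Integrable L0 μξ := by
    refine Integrable.mono ((integrable_const (1:ℝ)).add hL0sq)
      hL0meas.aestronglyMeasurable (ae_of_all _ fun ξ => ?_)
    simp only [Pi.add_apply]
    rw [Real.norm_eq_abs, Real.norm_eq_abs, abs_of_nonneg (by positivity : (0:ℝ) ≤ 1 + L0 ξ ^ 2)]
    nlinarith [sq_nonneg (|L0 ξ| - 1), sq_abs (L0 ξ), abs_nonneg (L0 ξ)]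
  have hLnn : 0 ≤ L := integral_nonneg_of_ae hL0nn
  -- f is L-Lipschitz on K
  have hlipf : ∀ w ∈ K, ∀ w' ∈ K, |f w - f w'| ≤ L * ‖w - w'‖ := by
    intro w hw w' hw'
    rw [hf, fbar, fbar, ← integral_sub (hFint w hw) (hFint w' hw')]
    calc |∫ ξ, F w ξ - F w' ξ ∂μξ| ≤ ∫ ξ, |F w ξ - F w' ξ| ∂μξ := by
          simpa [Real.norm_eq_abs] using
            norm_integral_le_integral_norm (fun ξ => F w ξ - F w' ξ) (μ := μξ)
      _ ≤ ∫ ξ, L0 ξ * ‖w - w'‖ ∂μξ := by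
          refine integral_mono_ae (((hFint w hw).sub (hFint w' hw')).abs)
            (hL0int.mul_const _) ?_
          filter_upwards [hlip] with ξ h
          exact h w hw w' hw'
      _ = L * ‖w - w'‖ := by rw [integral_mul_const, hL]
  have hfcont : ContinuousOn f K := by
    refine (LipschitzOnWith.of_dist_le_mul (K := L.toNNReal) (f := f) (s := K) ?_).continuousOn
    intro x hx y hy
    rw [Real.dist_eq, dist_eq_norm, Real.coe_toNNReal _ hLnn]
    exact hlipf x hx y hy
  -- key smoothing-error bound
  have key : ∀ w ∈ Binf d β, |smoothed α f w - f w| ≤ α * L * Real.sqrt (d / 12) := by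
    intro w hw
    have hsub : ∀ u ∈ Binf d (α / 2), w + u ∈ K := by
      intro u hu i
      calc |(w + u) i| = |w i + u i| := rfl
        _ ≤ |w i| + |u i| := abs_add_le _ _
        _ ≤ β + α / 2 := add_le_add (hw i) (hu i)
        _ ≤ κ := hκ.le
    have hgc : ContinuousOn (fun u => f (w + u)) (Binf d (α / 2)) := by
      refine hfcont.comp (Continuous.continuousOn (by continuity)) ?_
      intro u hu
      exact hsub u hu
    have hgint : Integrable (fun u => f (w + u)) (unifMeas d (α / 2)) :=
      integrable_unifMeas d (α / 2) hc _ hgc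
    have hnormint : Integrable (fun u : EuclideanSpace ℝ (Fin d) => ‖u‖) (unifMeas d (α / 2)) :=
      integrable_unifMeas d (α / 2) hc _ continuous_norm.continuousOn
    have hnormsqint : Integrable (fun u : EuclideanSpace ℝ (Fin d) => ‖u‖ ^ 2)
        (unifMeas d (α / 2)) :=
      integrable_unifMeas d (α / 2) hc _ (continuous_norm.pow 2).continuousOn
    have hdiff : smoothed α f w - f w = ∫ u, (f (w + u) - f w) ∂(unifMeas d (α / 2)) := by
      rw [integral_sub hgint (integrable_const _), integral_const, smoothed]
      simp [measure_univ]
    rw [hdiff]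
    calc |∫ u, (f (w + u) - f w) ∂(unifMeas d (α / 2))|
        ≤ ∫ u, |f (w + u) - f w| ∂(unifMeas d (α / 2)) := by
          simpa [Real.norm_eq_abs] using
            norm_integral_le_integral_norm (fun u => f (w + u) - f w) (μ := unifMeas d (α / 2))
      _ ≤ ∫ u, L * ‖u‖ ∂(unifMeas d (α / 2)) := by
          refine integral_mono_ae (hgint.sub (integrable_const _)).abs (hnormint.const_mul L) ?_
          filter_upwards [ae_mem_unifMeas d (α / 2)] with u hu
          have := hlipf (w + u) (hsub u hu) w (hβκ hw)
          rwa [add_sub_cancel_left] at this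
      _ = L * ∫ u, ‖u‖ ∂(unifMeas d (α / 2)) := integral_const_mul _ _
      _ ≤ L * Real.sqrt (∫ u, ‖u‖ ^ 2 ∂(unifMeas d (α / 2))) := by
          refine mul_le_mul_of_nonneg_left ?_ hLnn
          exact sq_int_le _ _ hnormint hnormsqint (integral_nonneg fun u => norm_nonneg _)
      _ = α * L * Real.sqrt (d / 12) := by
          rw [integral_normsq d (α / 2) hc]
          rw [show (d : ℝ) * (α / 2) ^ 2 / 3 = α ^ 2 * (d / 12) by ring,
            Real.sqrt_mul (sq_nonneg α), Real.sqrt_sq hα.le]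
          ring
  -- combine
  have h1 : smoothed α f wα - f wstar ≤ α * L * Real.sqrt (d / 12) := by
    have ha := hwαmin wstar hwstar
    have hb := key wstar hwstar.2
    have := abs_le.mp hb
    linarith
  have h2 : f wstar - smoothed α f wα ≤ α * L * Real.sqrt (d / 12) := by
    have ha := hwstarmin wα hwα
    have hb := key wα hwα.2
    have := abs_le.mp hb
    linarith
  rw [abs_le]
  constructor <;> [linarith; linarith]
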